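/- For any prime p and positive integer h ≤ p-1, the maximum size of a subset A of Z/pZ such that 0 is not a sum of h distinct elements of A equals ⌊(p-2)/h⌋ + h. -/

import Mathlib

section CNPart
open Finset Polynomial

variable {F : Type*} [Field F] [DecidableEq F]

lemma coeff_basis_top (S : Finset F) (t : ℕ) (hS : S.card = t + 1) {a : F} (ha : a ∈ S) :
    (Lagrange.basis S id a).coeff t = ∏ b ∈ S.erase a, (a - b)⁻¹ := by
  have h1 : Lagrange.basis S id a
      = C (Lagrange.nodalWeight S id a) * Lagrange.nodal (S.erase a) id := by
    rw [Lagrange.basis_eq_prod_sub_inv_mul_nodal_div ha, Lagrange.nodal_erase_eq_nodal_div ha]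
  have h2 : (Lagrange.nodal (S.erase a) id).Monic := Lagrange.nodal_monic
  have h3 : (Lagrange.nodal (S.erase a) id).natDegree = t := by
    rw [Lagrange.natDegree_nodal, card_erase_of_mem ha, hS]; omega
  rw [h1, coeff_C_mul, ← h3, h2.coeff_natDegree, mul_one]
  simp [Lagrange.nodalWeight]

lemma lag_coeff (S : Finset F) (t d : ℕ) (hS : S.card = t + 1) (hd : d ≤ t) :
    ∑ a ∈ S, a ^ d * ∏ b ∈ S.erase a, (a - b)⁻¹ = if d = t then 1 else 0 := by
  have hinj : Set.InjOn (id : F → F) S := Function.injective_id.injOn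
  have hdeg : (X ^ d : F[X]).degree < S.card := by
    rw [degree_X_pow, hS]
    exact_mod_cast Nat.lt_succ_of_le hd
  have h := Lagrange.eq_interpolate hinj hdeg
  have := congrArg (fun q => Polynomial.coeff q t) h
  simp only [Lagrange.interpolate_apply] at this
  rw [coeff_X_pow, finset_sum_coeff] at this
  have heq : ∀ a ∈ S, (C ((X ^ d : F[X]).eval (id a)) * Lagrange.basis S id a).coeff t
      = a ^ d * ∏ b ∈ S.erase a, (a - b)⁻¹ := by
    intro a ha
    rw [coeff_C_mul, coeff_basis_top S t hS ha]
    simp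
  rw [Finset.sum_congr rfl heq] at this
  rw [← this]
  simp [eq_comm]

/-- Combinatorial Nullstellensatz: coefficient formula. -/
lemma cn_coeff_formula {n : ℕ} (t : Fin n → ℕ) (S : Fin n → Finset F)
    (hS : ∀ i, (S i).card = t i + 1) (f : MvPolynomial (Fin n) F)
    (hdeg : f.totalDegree ≤ ∑ i, t i) :
    ∑ x ∈ Fintype.piFinset S, (MvPolynomial.eval x f) * ∏ i, ∏ b ∈ (S i).erase (x i), (x i - b)⁻¹
      = f.coeff (Finsupp.equivFunOnFinite.symm t) := by
  classical
  -- decompose f into monomials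
  conv_lhs => rw [← f.support_sum_monomial_coeff]
  conv_rhs => rw [← f.support_sum_monomial_coeff]
  rw [MvPolynomial.coeff_sum]
  simp only [map_sum, Finset.sum_mul]
  rw [Finset.sum_comm]
  refine Finset.sum_congr rfl fun d hd => ?_
  have hdsum : ∑ i, d i ≤ ∑ i, t i := by
    refine le_trans ?_ hdeg
    have := MvPolynomial.le_totalDegree (p := f) hd
    rwa [Finsupp.sum_fintype _ _ (fun _ => rfl)] at this
  -- evaluate monomial
  have heval : ∀ x : Fin n → F, MvPolynomial.eval x (MvPolynomial.monomial d (f.coeff d))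
      = f.coeff d * ∏ i, (x i) ^ (d i) := by
    intro x
    rw [MvPolynomial.eval_monomial]
    congr 1
    exact Finsupp.prod_fintype _ _ (fun _ => pow_zero _)
  calc ∑ x ∈ Fintype.piFinset S,
        MvPolynomial.eval x (MvPolynomial.monomial d (f.coeff d)) *
          ∏ i, ∏ b ∈ (S i).erase (x i), (x i - b)⁻¹
      = f.coeff d * ∑ x ∈ Fintype.piFinset S,
          ∏ i, ((x i) ^ (d i) * ∏ b ∈ (S i).erase (x i), (x i - b)⁻¹) := by
        rw [Finset.mul_sum]
        refine Finset.sum_congr rfl fun x _ => ?_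
        rw [heval x, Finset.prod_mul_distrib, mul_assoc]
    _ = f.coeff d * ∏ i, ∑ a ∈ S i, a ^ (d i) * ∏ b ∈ (S i).erase a, (a - b)⁻¹ := by
        rw [Finset.prod_univ_sum]
    _ = (MvPolynomial.monomial d (f.coeff d)).coeff (Finsupp.equivFunOnFinite.symm t) := by
        rw [MvPolynomial.coeff_monomial]
        by_cases hdt : d = Finsupp.equivFunOnFinite.symm t
        · rw [if_pos hdt]
          have hco : ∀ i, (d : Fin n → ℕ) i = t i := by
            intro i; rw [hdt]; rfl
          rw [Finset.prod_congr rfl (fun i _ => by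
            rw [lag_coeff (S i) (t i) (d i) (hS i) (le_of_eq (hco i)), if_pos (hco i)])]
          simp
        · rw [if_neg hdt]
          -- find i with d i < t i
          have hne : ∃ i, (d : Fin n → ℕ) i ≠ t i := by
            by_contra hc
            push_neg at hc
            exact hdt (Finsupp.ext hc)
          have hlt : ∃ i, (d : Fin n → ℕ) i < t i := by
            by_contra hc
            push_neg at hc
            obtain ⟨i, hi⟩ := hne
            have : ∑ i, t i < ∑ i, d i :=
              Finset.sum_lt_sum (fun i _ => hc i) ⟨i, Finset.mem_univ i, lt_of_le_of_ne (hc i) (Ne.symm hi)⟩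
            omega
          obtain ⟨i, hi⟩ := hlt
          rw [Finset.prod_eq_zero (Finset.mem_univ i)
            (by rw [lag_coeff (S i) (t i) (d i) (hS i) (le_of_lt hi), if_neg (ne_of_lt hi)])]
          simp

end CNPart

section IntPart
open Finset MvPolynomial

variable {R : Type*} [CommRing R]

lemma prod_X_pow_eq_monomial' {n : ℕ} (k : Fin n → ℕ) :
    (∏ i, (X i : MvPolynomial (Fin n) R) ^ k i)
      = monomial (Finsupp.equivFunOnFinite.symm k) 1 := by
  rw [monomial_eq, C_1, one_mul]
  rw [Finsupp.prod_fintype _ _ (fun _ => pow_zero _)]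
  rfl

lemma coeff_sum_X_pow {n : ℕ} (N : ℕ) (u : Fin n →₀ ℕ) (hu : ∑ i, u i = N) :
    ((∑ i, (X i : MvPolynomial (Fin n) ℤ)) ^ N).coeff u
      = (Nat.multinomial Finset.univ ⇑u : ℤ) := by
  classical
  rw [Finset.sum_pow_eq_sum_piAntidiag]
  rw [MvPolynomial.coeff_sum]
  have hmem : (⇑u : Fin n → ℕ) ∈ Finset.piAntidiag Finset.univ N := by
    rw [Finset.mem_piAntidiag]
    exact ⟨hu, fun i _ => Finset.mem_univ i⟩
  rw [Finset.sum_eq_single_of_mem _ hmem]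
  · rw [prod_X_pow_eq_monomial', Finsupp.equivFunOnFinite_symm_coe]
    rw [← MvPolynomial.C_eq_coe_nat, MvPolynomial.C_mul_monomial, mul_one,
      MvPolynomial.coeff_monomial, if_pos rfl]
  · intro k hk hne
    rw [prod_X_pow_eq_monomial', ← MvPolynomial.C_eq_coe_nat, MvPolynomial.C_mul_monomial, mul_one,
      MvPolynomial.coeff_monomial, if_neg, ]
    intro hc
    apply hne
    have := congrArg (⇑Finsupp.equivFunOnFinite) hc
    rw [Equiv.apply_symm_apply] at this; exact this

-- ℕ-level multinomial/descFactorial identity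
lemma nat_mult_desc {h : ℕ} (u v : Fin h → ℕ) (hv : ∀ i, v i ≤ u i) :
    (∏ i, (u i).factorial) * Nat.multinomial Finset.univ (fun i => u i - v i)
      = (∑ i, (u i - v i)).factorial * ∏ i, (u i).descFactorial (v i) := by
  have h1 : ∀ i, (u i).factorial = (u i - v i).factorial * (u i).descFactorial (v i) :=
    fun i => (Nat.factorial_mul_descFactorial (hv i)).symm
  calc (∏ i, (u i).factorial) * Nat.multinomial Finset.univ (fun i => u i - v i)
      = ((∏ i, (u i - v i).factorial) * Nat.multinomial Finset.univ (fun i => u i - v i))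
          * ∏ i, (u i).descFactorial (v i) := by
        rw [Finset.prod_congr rfl (fun i _ => h1 i), Finset.prod_mul_distrib]; ring
    _ = _ := by rw [Nat.multinomial_spec]

lemma desc_det {h : ℕ} (t : Fin h → ℕ) :
    ∑ σ : Equiv.Perm (Fin h), (Equiv.Perm.sign σ : ℤ) * ∏ i, ((t (σ i)).descFactorial (i : ℕ) : ℤ)
      = ∏ i, ∏ j ∈ Finset.Ioi i, ((t j : ℤ) - (t i : ℤ)) := by
  have hdet : (Matrix.of fun (a b : Fin h) => ((t a).descFactorial (b : ℕ) : ℤ)).det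
      = ∑ σ : Equiv.Perm (Fin h), (Equiv.Perm.sign σ : ℤ)
          * ∏ i, ((t (σ i)).descFactorial (i : ℕ) : ℤ) := by
    rw [Matrix.det_apply']
    rfl
  rw [← hdet]
  have : (Matrix.of fun (a b : Fin h) => ((t a).descFactorial (b : ℕ) : ℤ))
      = Matrix.of fun (a b : Fin h) => (descPochhammer ℤ (b : ℕ)).eval ((t a : ℤ)) := by
    ext a b
    simp [descPochhammer_eval_eq_descFactorial]
  rw [this, ← Matrix.det_eval_matrixOfPolynomials_eq_det_vandermonde (fun i => (t i : ℤ))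
    (fun j => descPochhammer ℤ (j : ℕ))
    (fun j => descPochhammer_natDegree _ (R := ℤ))
    (fun j => monic_descPochhammer ℤ _), Matrix.det_vandermonde]

lemma int_coeff_eq (h N : ℕ) (t : Fin h → ℕ) (hts : ∑ i, t i = N + ∑ i : Fin h, (i : ℕ)) :
    (∏ i, ((t i).factorial : ℤ)) *
      (((∑ i, (X i : MvPolynomial (Fin h) ℤ)) ^ N *
        ∏ i, ∏ j ∈ Finset.Ioi i, (X j - X i)).coeff (Finsupp.equivFunOnFinite.symm t))
      = (N.factorial : ℤ) * ∏ i, ∏ j ∈ Finset.Ioi i, ((t j : ℤ) - (t i : ℤ)) := by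
  classical
  set L : MvPolynomial (Fin h) ℤ := ∑ i, X i with hL
  set tF : Fin h →₀ ℕ := Finsupp.equivFunOnFinite.symm t with htF
  have htFc : ∀ i, tF i = t i := fun i => rfl
  -- Vandermonde expansion
  have hV : (∏ i, ∏ j ∈ Finset.Ioi i, ((X j : MvPolynomial (Fin h) ℤ) - X i))
      = ∑ σ : Equiv.Perm (Fin h), (Equiv.Perm.sign σ : ℤ)
          • monomial (Finsupp.equivFunOnFinite.symm (fun j => ((σ⁻¹ j : Fin h) : ℕ))) 1 := by
    rw [← Matrix.det_vandermonde (fun i => (X i : MvPolynomial (Fin h) ℤ)), Matrix.det_apply]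
    refine Finset.sum_congr rfl fun σ _ => ?_
    congr 1
    have h1 : ∀ i : Fin h, (fun j => ((σ⁻¹ j : Fin h) : ℕ)) (σ i) = (i : ℕ) := by
      intro i; simp
    calc ∏ i, Matrix.vandermonde (fun i => (X i : MvPolynomial (Fin h) ℤ)) (σ i) i
        = ∏ i, (fun j => (X j : MvPolynomial (Fin h) ℤ) ^ ((σ⁻¹ j : Fin h) : ℕ)) (σ i) := by
          refine Finset.prod_congr rfl fun i _ => ?_
          simp [Matrix.vandermonde_apply]
      _ = ∏ j, (fun j => (X j : MvPolynomial (Fin h) ℤ) ^ ((σ⁻¹ j : Fin h) : ℕ)) j :=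
          Equiv.prod_comp σ (fun j => (X j : MvPolynomial (Fin h) ℤ) ^ ((σ⁻¹ j : Fin h) : ℕ))
      _ = _ := prod_X_pow_eq_monomial' _
  rw [hV, Finset.mul_sum, MvPolynomial.coeff_sum, Finset.mul_sum]
  -- per-permutation computation
  have hterm : ∀ σ : Equiv.Perm (Fin h),
      (∏ i, ((t i).factorial : ℤ)) *
        (L ^ N * ((Equiv.Perm.sign σ : ℤ)
          • monomial (Finsupp.equivFunOnFinite.symm (fun j => ((σ⁻¹ j : Fin h) : ℕ))) 1)).coeff tF
      = (N.factorial : ℤ) * ((Equiv.Perm.sign σ : ℤ)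
          * ∏ i, ((t (σ i)).descFactorial (i : ℕ) : ℤ)) := by
    intro σ
    set d : Fin h → ℕ := fun j => ((σ⁻¹ j : Fin h) : ℕ) with hd
    set dF : Fin h →₀ ℕ := Finsupp.equivFunOnFinite.symm d with hdF
    have hdsum : ∑ j, d j = ∑ i : Fin h, (i : ℕ) := Equiv.sum_comp σ⁻¹ (fun i => (i : ℕ))
    have hdesc : ∏ j, ((t j).descFactorial (d j) : ℤ)
        = ∏ i, ((t (σ i)).descFactorial (i : ℕ) : ℤ) := by
      rw [← Equiv.prod_comp σ (fun j => ((t j).descFactorial (d j) : ℤ))]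
      refine Finset.prod_congr rfl fun i _ => ?_
      congr 1
      simp [hd]
    rw [mul_comm (L ^ N), smul_mul_assoc, MvPolynomial.coeff_smul,
      MvPolynomial.coeff_monomial_mul', one_mul]
    by_cases hle : dF ≤ tF
    · rw [if_pos hle]
      have hlept : ∀ i, d i ≤ t i := fun i => hle i
      have hsub : ∀ i, (tF - dF) i = t i - d i := fun i => rfl
      have hsum2 : ∑ i, (t i - d i) = N := by
        have : ∑ i, ((t i - d i) + d i) = ∑ i, t i := by
          refine Finset.sum_congr rfl fun i _ => ?_
          have := hlept i; omega
        rw [Finset.sum_add_distrib] at this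
        omega
      have : (L ^ N).coeff (tF - dF) = (Nat.multinomial Finset.univ (fun i => t i - d i) : ℤ) := by
        rw [hL, coeff_sum_X_pow N (tF - dF) (by rw [Finset.sum_congr rfl fun i _ => hsub i, hsum2])]
        have hfe : ⇑(tF - dF) = fun i => t i - d i := funext hsub
        rw [hfe]
      rw [this]
      rw [smul_eq_mul]
      have hkey : (∏ i, ((t i).factorial : ℤ)) * (Nat.multinomial Finset.univ (fun i => t i - d i) : ℤ)
          = (N.factorial : ℤ) * ∏ i, ((t i).descFactorial (d i) : ℤ) := by
        have := nat_mult_desc t d hlept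
        rw [hsum2] at this
        exact_mod_cast congrArg (fun z : ℕ => (z : ℤ)) this
      calc (∏ i, ((t i).factorial : ℤ)) * ((Equiv.Perm.sign σ : ℤ) * (Nat.multinomial Finset.univ (fun i => t i - d i) : ℤ))
          = (Equiv.Perm.sign σ : ℤ) * ((∏ i, ((t i).factorial : ℤ)) * (Nat.multinomial Finset.univ (fun i => t i - d i) : ℤ)) := by ring
        _ = (Equiv.Perm.sign σ : ℤ) * ((N.factorial : ℤ) * ∏ i, ((t i).descFactorial (d i) : ℤ)) := by rw [hkey]
        _ = _ := by rw [hdesc]; ring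
    · rw [if_neg hle]
      have : ∃ i, t i < d i := by
        by_contra hc
        push_neg at hc
        exact hle (fun i => hc i)
      obtain ⟨i, hi⟩ := this
      have hz : ((t i).descFactorial (d i) : ℤ) = 0 := by
        rw [Nat.descFactorial_eq_zero_iff_lt.mpr hi]; rfl
      have hz2 : ∏ i, ((t (σ i)).descFactorial (i : ℕ) : ℤ) = 0 := by
        rw [← hdesc]; exact Finset.prod_eq_zero (Finset.mem_univ i) hz
      rw [hz2]
      simp
  rw [Finset.sum_congr rfl (fun σ _ => hterm σ), ← Finset.mul_sum, desc_det]

end IntPart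

section UpperPart
open Finset MvPolynomial

-- expansion of product of (L - C e)
lemma prod_linear_expand {F : Type} [CommRing F] {n : ℕ} (L : MvPolynomial (Fin n) F)
    (hL : L.totalDegree ≤ 1) (E : Finset F) :
    ∃ r : MvPolynomial (Fin n) F, (∏ e ∈ E, (L - C e)) = L ^ E.card + r ∧
      (r = 0 ∨ r.totalDegree < E.card) := by
  classical
  induction E using Finset.induction_on with
  | empty => exact ⟨0, by simp, Or.inl rfl⟩
  | @insert a E ha ih =>
    obtain ⟨r, hr, hro⟩ := ih
    refine ⟨L * r - C a * L ^ E.card - C a * r, ?_, ?_⟩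
    · rw [Finset.prod_insert ha, hr, Finset.card_insert_of_notMem ha]
      ring
    · right
      rw [Finset.card_insert_of_notMem ha]
      have hLE : (L ^ E.card).totalDegree ≤ E.card := by
        refine le_trans (MvPolynomial.totalDegree_pow _ _) ?_
        calc E.card * L.totalDegree ≤ E.card * 1 := Nat.mul_le_mul_left _ hL
          _ = E.card := Nat.mul_one _
      have hCa : (C a * L ^ E.card : MvPolynomial (Fin n) F).totalDegree ≤ E.card := by
        refine le_trans (MvPolynomial.totalDegree_mul _ _) ?_
        simp [hLE, MvPolynomial.totalDegree_C]
      have hr' : r.totalDegree ≤ E.card ∧ (L * r).totalDegree ≤ E.card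
          ∧ (C a * r).totalDegree ≤ E.card := by
        rcases hro with h0 | hlt
        · subst h0; simp
        · refine ⟨le_of_lt hlt, ?_, ?_⟩
          · refine le_trans (MvPolynomial.totalDegree_mul _ _) ?_
            omega
          · refine le_trans (MvPolynomial.totalDegree_mul _ _) ?_
            simp [MvPolynomial.totalDegree_C]
            omega
      calc (L * r - C a * L ^ E.card - C a * r).totalDegree
          ≤ max (L * r - C a * L ^ E.card).totalDegree (C a * r).totalDegree :=
            MvPolynomial.totalDegree_sub _ _
        _ ≤ max (max (L * r).totalDegree (C a * L ^ E.card).totalDegree) (C a * r).totalDegree := by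
            exact max_le_max (MvPolynomial.totalDegree_sub _ _) le_rfl
        _ ≤ E.card := by
            rw [max_le_iff, max_le_iff]
            exact ⟨⟨hr'.2.1, hCa⟩, hr'.2.2⟩
        _ < E.card + 1 := Nat.lt_succ_self _

lemma upper_contradiction (p h : ℕ) (hp : p.Prime) (h1 : 1 ≤ h) (h2 : h ≤ p - 1)
    (A : Finset (ZMod p)) (hcard : A.card = (p - 2) / h + h + 1)
    (hno : ¬ ∃ B ⊆ A, B.card = h ∧ B.sum id = (0 : ZMod p)) : False := by
  classical
  haveI : Fact p.Prime := ⟨hp⟩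
  have hp2 : 2 ≤ p := hp.two_le
  set q := (p - 1) / h with hq
  set rr := (p - 1) % h with hrr
  have hqr : h * q + rr = p - 1 := Nat.div_add_mod (p - 1) h
  have hrlt : rr < h := Nat.mod_lt _ h1
  set c : Fin h → ℕ := fun i => q + (if h - rr ≤ (i : ℕ) then 1 else 0) with hc
  set t : Fin h → ℕ := fun i => (i : ℕ) + c i with ht
  -- sum of c
  have hsumite : ∑ i : Fin h, (if h - rr ≤ (i : ℕ) then 1 else 0) = rr := by
    rw [Fin.sum_univ_eq_sum_range (fun k => if h - rr ≤ k then 1 else 0) h]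
    rw [Finset.sum_boole]
    have : (Finset.range h).filter (fun k => h - rr ≤ k) = Finset.Ico (h - rr) h := by
      ext k
      simp [Finset.mem_Ico, Finset.mem_range, and_comm]
    rw [this, Nat.card_Ico]
    exact Nat.sub_sub_self (le_of_lt hrlt)
  have hsumc : ∑ i, c i = p - 1 := by
    rw [hc]
    simp only [Finset.sum_add_distrib, Finset.sum_const, Finset.card_univ, Fintype.card_fin,
      smul_eq_mul]
    rw [hsumite]
    omega
  have hsumt : ∑ i, t i = (p - 1) + ∑ i : Fin h, (i : ℕ) := by
    rw [ht]
    simp only [Finset.sum_add_distrib]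
    rw [hsumc]
    ring
  have hmono : ∀ i j : Fin h, i < j → t i < t j := by
    intro i j hij
    have hcij : c i ≤ c j := by
      simp only [hc]
      have : (i : ℕ) ≤ (j : ℕ) := le_of_lt hij
      by_cases hi : h - rr ≤ (i : ℕ)
      · rw [if_pos hi, if_pos (le_trans hi this)]
      · simp only [hi, if_false]
        split <;> omega
    have : (i : ℕ) < (j : ℕ) := hij
    simp only [ht]
    omega
  have hciq : ∀ i : Fin h, c i ≤ (p - 2) / h + 1 := by
    intro i
    have hMc : q * h = h * q := Nat.mul_comm q h
    by_cases hr0 : rr = 0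
    · have hq1 : 1 ≤ q := by
        rcases Nat.eq_zero_or_pos q with h0 | h0
        · rw [h0] at hqr; omega
        · exact h0
      have hdiv : (p - 2) / h = q - 1 := by
        apply Nat.div_eq_of_lt_le
        · have : (q - 1) * h = q * h - h := by
            rw [Nat.sub_mul, one_mul]
          omega
        · have : (q - 1 + 1) * h = q * h := by
            congr 1
            omega
          omega
      have hci : c i = q := by
        simp only [hc, hr0, Nat.sub_zero]
        rw [if_neg (by exact not_le.mpr i.isLt)]
        omega
      omega
    · have hdiv : (p - 2) / h = q := by
        apply Nat.div_eq_of_lt_le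
        · omega
        · have : (q + 1) * h = q * h + h := by ring
          omega
      have : c i ≤ q + 1 := by
        simp only [hc]
        split <;> omega
      omega
  have hti : ∀ i : Fin h, t i + 1 ≤ A.card := by
    intro i
    have := hciq i
    have h4 : (i : ℕ) < h := i.isLt
    simp only [ht]
    omega
  have htp : ∀ i : Fin h, t i ≤ p - 1 := by
    intro i
    have hkey : (p - 2) / h + h ≤ p - 1 := by
      set d := (p - 2) / h with hd
      have hdh : d * h ≤ p - 2 := Nat.div_mul_le_self _ _
      rcases Nat.eq_zero_or_pos d with h0 | h0
      · omega
      · have : d + h ≤ d * h + 1 := by nlinarith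
        omega
    have := hti i
    omega
  -- choose nested subsets
  have hex : ∀ i : Fin h, ∃ s ⊆ A, s.card = t i + 1 := fun i =>
    Finset.exists_subset_card_eq (hti i)
  choose S hSsub hScard using hex
  set L : MvPolynomial (Fin h) (ZMod p) := ∑ i, X i with hL
  set V : MvPolynomial (Fin h) (ZMod p) := ∏ i, ∏ j ∈ Finset.Ioi i, (X j - X i) with hV
  set E : Finset (ZMod p) := Finset.univ.erase 0 with hE
  have hEcard : E.card = p - 1 := by
    rw [hE, Finset.card_erase_of_mem (Finset.mem_univ _), Finset.card_univ, ZMod.card]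
  set f : MvPolynomial (Fin h) (ZMod p) := (∏ e ∈ E, (L - C e)) * V with hf
  -- degrees
  have hLdeg : L.totalDegree ≤ 1 := by
    refine le_trans (MvPolynomial.totalDegree_finset_sum _ _) ?_
    exact Finset.sup_le fun i _ => (MvPolynomial.totalDegree_X (R := ZMod p) i).le
  have hsub1 : ∀ i j : Fin h, ((X j - X i : MvPolynomial (Fin h) (ZMod p))).totalDegree ≤ 1 := by
    intro i j
    refine le_trans (MvPolynomial.totalDegree_sub _ _) ?_
    exact max_le (MvPolynomial.totalDegree_X (R := ZMod p) j).le
      (MvPolynomial.totalDegree_X (R := ZMod p) i).le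
  have hIoiSum : ∑ i : Fin h, (Finset.Ioi i).card = ∑ i : Fin h, (i : ℕ) := by
    simp only [Fin.card_Ioi]
    rw [Fin.sum_univ_eq_sum_range (fun k => h - 1 - k) h, Fin.sum_univ_eq_sum_range (fun k => k) h]
    exact Finset.sum_range_reflect (fun k => k) h
  have hVdeg : V.totalDegree ≤ ∑ i : Fin h, (i : ℕ) := by
    refine le_trans (MvPolynomial.totalDegree_finset_prod _ _) ?_
    rw [← hIoiSum]
    refine Finset.sum_le_sum fun i _ => ?_
    refine le_trans (MvPolynomial.totalDegree_finset_prod _ _) ?_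
    calc ∑ j ∈ Finset.Ioi i, ((X j - X i : MvPolynomial (Fin h) (ZMod p))).totalDegree
        ≤ ∑ j ∈ Finset.Ioi i, 1 := Finset.sum_le_sum fun j _ => hsub1 i j
      _ = (Finset.Ioi i).card := by rw [Finset.sum_const, smul_eq_mul, mul_one]
  have hproddeg : (∏ e ∈ E, (L - C e)).totalDegree ≤ p - 1 := by
    refine le_trans (MvPolynomial.totalDegree_finset_prod _ _) ?_
    calc ∑ e ∈ E, (L - C e).totalDegree ≤ ∑ e ∈ E, 1 := by
          refine Finset.sum_le_sum fun e _ => ?_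
          refine le_trans (MvPolynomial.totalDegree_sub _ _) ?_
          exact max_le hLdeg (le_trans (le_of_eq (MvPolynomial.totalDegree_C _)) (Nat.zero_le _))
      _ = E.card := by rw [Finset.sum_const, smul_eq_mul, mul_one]
      _ = p - 1 := hEcard
  have hfdeg : f.totalDegree ≤ ∑ i, t i := by
    rw [hsumt]
    refine le_trans (MvPolynomial.totalDegree_mul _ _) ?_
    exact Nat.add_le_add hproddeg hVdeg
  -- vanishing
  have hvanish : ∀ x ∈ Fintype.piFinset S, MvPolynomial.eval x f = 0 := by
    intro x hx
    rw [Fintype.mem_piFinset] at hx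
    have hev : MvPolynomial.eval x f
        = (∏ e ∈ E, ((∑ i, x i) - e)) * ∏ i, ∏ j ∈ Finset.Ioi i, (x j - x i) := by
      simp [hf, hL, hV]
    by_cases hinj : Function.Injective x
    · have hne : (∑ i, x i) ≠ 0 := by
        intro h0
        apply hno
        refine ⟨Finset.image x Finset.univ, ?_, ?_, ?_⟩
        · intro b hb
          rw [Finset.mem_image] at hb
          obtain ⟨i, _, rfl⟩ := hb
          exact hSsub i (hx i)
        · rw [Finset.card_image_of_injective _ hinj, Finset.card_univ, Fintype.card_fin]
        · rw [Finset.sum_image (fun i _ j _ hij => hinj hij)]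
          simpa using h0
      rw [hev]
      apply mul_eq_zero_of_left
      refine Finset.prod_eq_zero (Finset.mem_erase.mpr ⟨hne, Finset.mem_univ _⟩) ?_
      simp
    · rw [Function.not_injective_iff] at hinj
      obtain ⟨i, j, heq, hne⟩ := hinj
      have hz : ∀ a b : Fin h, a < b → x b = x a →
          (∏ i, ∏ j ∈ Finset.Ioi i, (x j - x i)) = 0 := by
        intro a b hab hxy
        refine Finset.prod_eq_zero (Finset.mem_univ a) ?_
        refine Finset.prod_eq_zero (Finset.mem_Ioi.mpr hab) ?_
        rw [hxy, sub_self]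
      rw [hev]
      apply mul_eq_zero_of_right
      rcases hne.lt_or_gt with hlt | hlt
      · exact hz i j hlt heq.symm
      · exact hz j i hlt heq
  -- CN: coefficient vanishes
  have hcoeff0 : f.coeff (Finsupp.equivFunOnFinite.symm t) = 0 := by
    rw [← cn_coeff_formula t S hScard f hfdeg]
    refine Finset.sum_eq_zero fun x hx => ?_
    rw [hvanish x hx, zero_mul]
  -- identify coefficient
  obtain ⟨r, hre, hro⟩ := prod_linear_expand L hLdeg E
  have hsplit : f = L ^ E.card * V + r * V := by
    rw [hf, hre]; ring
  set tF : Fin h →₀ ℕ := Finsupp.equivFunOnFinite.symm t with htF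
  have hsupp : ∑ i ∈ tF.support, tF i = ∑ i, t i :=
    Finset.sum_subset (Finset.subset_univ _)
      (fun i _ hni => Finsupp.notMem_support_iff.mp hni)
  have hcoeff_r : (r * V).coeff tF = 0 := by
    rcases hro with h0 | hlt
    · rw [h0, zero_mul, MvPolynomial.coeff_zero]
    · apply MvPolynomial.coeff_eq_zero_of_totalDegree_lt
      rw [hsupp]
      calc (r * V).totalDegree ≤ r.totalDegree + V.totalDegree :=
            MvPolynomial.totalDegree_mul _ _
        _ < (p - 1) + ∑ i : Fin h, (i : ℕ) := by
            rw [← hEcard]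
            omega
        _ = ∑ i, t i := hsumt.symm
  set cz : ℤ := (((∑ i, (X i : MvPolynomial (Fin h) ℤ)) ^ (p - 1) *
      ∏ i, ∏ j ∈ Finset.Ioi i, (X j - X i)).coeff tF) with hcz
  have hmapped : MvPolynomial.map (Int.castRingHom (ZMod p))
      ((∑ i, (X i : MvPolynomial (Fin h) ℤ)) ^ (p - 1) *
        ∏ i, ∏ j ∈ Finset.Ioi i, (X j - X i)) = L ^ E.card * V := by
    rw [hEcard]
    simp [hL, hV, map_mul, map_pow, map_prod, map_sub, map_sum, MvPolynomial.map_X]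
  have hmap : (L ^ E.card * V).coeff tF = ((cz : ℤ) : ZMod p) := by
    rw [← hmapped, MvPolynomial.coeff_map, hcz]
    rfl
  have hczzero : ((cz : ℤ) : ZMod p) = 0 := by
    have hthis := congrArg (fun g : MvPolynomial (Fin h) (ZMod p) => g.coeff tF) hsplit
    simp only [MvPolynomial.coeff_add] at hthis
    rw [hcoeff_r, add_zero, hmap] at hthis
    rw [← hthis]
    exact hcoeff0
  -- the integer identity
  have hident := int_coeff_eq h (p - 1) t hsumt
  rw [← htF, ← hcz] at hident
  have hcast := congrArg (fun z : ℤ => ((z : ℤ) : ZMod p)) hident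
  simp only [Int.cast_mul, Int.cast_natCast, Int.cast_prod, Int.cast_sub] at hcast
  rw [hczzero, mul_zero] at hcast
  -- RHS is nonzero
  have hfact : ∀ n : ℕ, n ≤ p - 1 → ((n.factorial : ℕ) : ZMod p) ≠ 0 := by
    intro n hn hz
    rw [ZMod.natCast_eq_zero_iff] at hz
    rw [Nat.Prime.dvd_factorial hp] at hz
    omega
  have hrhs : (((p - 1).factorial : ℕ) : ZMod p) * ∏ i : Fin h, ∏ j ∈ Finset.Ioi i,
      (((t j : ℕ) : ZMod p) - ((t i : ℕ) : ZMod p)) ≠ 0 := by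
    apply mul_ne_zero
    · exact hfact _ le_rfl
    · rw [Finset.prod_ne_zero_iff]
      intro i _
      rw [Finset.prod_ne_zero_iff]
      intro j hj hzz
      rw [Finset.mem_Ioi] at hj
      have h5 : t i < t j := hmono i j hj
      have h6 : t j ≤ p - 1 := htp j
      have hzi : (((t j : ℤ) - (t i : ℤ) : ℤ) : ZMod p) = 0 := by
        push_cast
        -- cast
        linear_combination hzz
      rw [ZMod.intCast_zmod_eq_zero_iff_dvd] at hzi
      have hpos : (0 : ℤ) < (t j : ℤ) - (t i : ℤ) := by
        have : ((t i : ℤ)) < (t j : ℤ) := by exact_mod_cast h5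
        omega
      have := Int.le_of_dvd hpos hzi
      omega
  exact hrhs hcast.symm

end UpperPart

section MemberPart
open Finset

lemma sum_lb : ∀ (n : ℕ) (K : Finset ℕ), K.card = n → ∑ k ∈ Finset.range n, k ≤ ∑ k ∈ K, k := by
  intro n
  induction n with
  | zero => intro K _; simp
  | succ n ih =>
    intro K hK
    have hne : K.Nonempty := by
      rw [← Finset.card_pos, hK]; omega
    set M := K.max' hne with hM
    have hMK : M ∈ K := K.max'_mem hne
    have hKsub : K ⊆ Finset.range (M + 1) := by
      intro k hk
      rw [Finset.mem_range]
      exact Nat.lt_succ_of_le (K.le_max' k hk)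
    have hMn : n ≤ M := by
      have := Finset.card_le_card hKsub
      rw [hK, Finset.card_range] at this
      omega
    have hIH := ih (K.erase M) (by rw [Finset.card_erase_of_mem hMK, hK]; rfl)
    have hsplit : ∑ k ∈ K.erase M, k + M = ∑ k ∈ K, k := Finset.sum_erase_add _ _ hMK
    rw [Finset.sum_range_succ]
    omega

lemma member_lemma (p h : ℕ) (hp : p.Prime) (h1 : 1 ≤ h) (h2 : h ≤ p - 1) :
    ∃ A : Finset (ZMod p), A.card = (p - 2) / h + h ∧
      ¬ ∃ B ⊆ A, B.card = h ∧ B.sum id = (0 : ZMod p) := by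
  classical
  haveI : Fact p.Prime := ⟨hp⟩
  have hp2 : 2 ≤ p := hp.two_le
  set m := (p - 2) / h + h with hm
  have hkey : (p - 2) / h + h ≤ p - 1 := by
    set d := (p - 2) / h with hd
    have hdh : d * h ≤ p - 2 := Nat.div_mul_le_self _ _
    rcases Nat.eq_zero_or_pos d with h0 | h0
    · omega
    · have : d + h ≤ d * h + 1 := by nlinarith
      omega
  have hmp : m ≤ p - 1 := hkey
  set C0 := ∑ k ∈ Finset.range h, k with hC0
  have hhz : (h : ZMod p) ≠ 0 := by
    intro hz
    rw [ZMod.natCast_eq_zero_iff] at hz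
    have := Nat.le_of_dvd (by omega) hz
    omega
  set x₀ : ZMod p := (h : ZMod p)⁻¹ * (1 - (C0 : ZMod p)) with hx₀def
  have hx₀ : (h : ZMod p) * x₀ = 1 - (C0 : ZMod p) := by
    rw [hx₀def, ← mul_assoc, mul_inv_cancel₀ hhz, one_mul]
  set g : ℕ → ZMod p := fun k => x₀ + k with hg
  have hginj : Set.InjOn g (Finset.range m) := by
    intro k1 hk1 k2 hk2 he
    rw [Finset.coe_range, Set.mem_Iio] at hk1 hk2
    have : (k1 : ZMod p) = k2 := by
      have := add_left_cancel he
      exact_mod_cast this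
    have hv := congrArg ZMod.val this
    rwa [ZMod.val_cast_of_lt (by omega), ZMod.val_cast_of_lt (by omega)] at hv
  refine ⟨(Finset.range m).image g, ?_, ?_⟩
  · rw [Finset.card_image_of_injOn hginj, Finset.card_range]
  · rintro ⟨B, hBsub, hBcard, hBsum⟩
    set K := (Finset.range m).filter (fun k => g k ∈ B) with hK
    have hKsub : K ⊆ Finset.range m := Finset.filter_subset _ _
    have hKinj : Set.InjOn g K := hginj.mono (by exact_mod_cast Finset.coe_subset.mpr hKsub)
    have hKim : K.image g = B := by
      ext b
      constructor
      · intro hb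
        rw [Finset.mem_image] at hb
        obtain ⟨k, hk, rfl⟩ := hb
        rw [hK, Finset.mem_filter] at hk
        exact hk.2
      · intro hb
        have := hBsub hb
        rw [Finset.mem_image] at this
        obtain ⟨k, hk, rfl⟩ := this
        rw [Finset.mem_image]
        exact ⟨k, by rw [hK, Finset.mem_filter]; exact ⟨hk, hb⟩, rfl⟩
    have hKcard : K.card = h := by
      rw [← hBcard, ← hKim, Finset.card_image_of_injOn hKinj]
    set s := ∑ k ∈ K, k with hs
    have hlb : C0 ≤ s := sum_lb h K hKcard
    have hhm : h ≤ m := by rw [hm]; exact Nat.le_add_left h _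
    have hub : s ≤ h * (m - h) + C0 := by
      set K' := Finset.range m \ K with hK'
      have hK'card : K'.card = m - h := by
        rw [hK', Finset.card_sdiff_of_subset hKsub, Finset.card_range, hKcard]
      have hsum_split : ∑ k ∈ K', k + s = ∑ k ∈ Finset.range m, k :=
        Finset.sum_sdiff hKsub
      have hlb' : ∑ k ∈ Finset.range (m - h), k ≤ ∑ k ∈ K', k := sum_lb (m - h) K' hK'card
      have hico : ∑ k ∈ Finset.range (m - h), k + ∑ k ∈ Finset.Ico (m - h) m, k
          = ∑ k ∈ Finset.range m, k := by
        rw [Finset.range_eq_Ico, Finset.range_eq_Ico]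
        exact Finset.sum_Ico_consecutive (fun k => k) (Nat.zero_le (m - h)) (by omega : m - h ≤ m)
      have hicoval : ∑ k ∈ Finset.Ico (m - h) m, k = h * (m - h) + C0 := by
        rw [Finset.sum_Ico_eq_sum_range]
        have hmh : m - (m - h) = h := by omega
        rw [hmh, Finset.sum_add_distrib, Finset.sum_const, Finset.card_range, smul_eq_mul]
      omega
    have hsZ : B.sum id = ((1 + (s - C0) : ℕ) : ZMod p) := by
      rw [← hKim, Finset.sum_image (fun a ha b hb hab => hKinj ha hb hab)]
      have : ∑ k ∈ K, id (g k) = K.card • x₀ + ∑ k ∈ K, (k : ZMod p) := by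
        simp [hg, Finset.sum_add_distrib]
      rw [this, hKcard]
      have hcast : ∑ k ∈ K, (k : ZMod p) = (s : ZMod p) := by
        rw [hs]; push_cast; rfl
      rw [hcast]
      have h1c : ((1 + (s - C0) : ℕ) : ZMod p) = 1 + (s : ZMod p) - (C0 : ZMod p) := by
        push_cast [Nat.cast_sub hlb]
        ring
      rw [h1c]
      rw [nsmul_eq_mul, hx₀]
      ring
    rw [hsZ] at hBsum
    rw [ZMod.natCast_eq_zero_iff] at hBsum
    have hle : 1 + (s - C0) ≤ p - 1 := by
      have hdm : m - h = (p - 2) / h := by omega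
      have : h * (m - h) ≤ p - 2 := by
        rw [hdm, Nat.mul_comm]
        exact Nat.div_mul_le_self _ _
      omega
    have := Nat.le_of_dvd (by omega) hBsum
    omega

end MemberPart

theorem stmt1 (p h : ℕ) (hp : p.Prime) (h1 : 1 ≤ h) (h2 : h ≤ p - 1) :
    IsGreatest {m : ℕ | ∃ A : Finset (ZMod p), A.card = m ∧
      ¬ ∃ B ⊆ A, B.card = h ∧ B.sum id = (0 : ZMod p)} ((p - 2) / h + h) := by
  constructor
  · obtain ⟨A, hA1, hA2⟩ := member_lemma p h hp h1 h2
    exact ⟨A, hA1, hA2⟩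
  · rintro m ⟨A, hAc, hAno⟩
    by_contra hgt
    push_neg at hgt
    obtain ⟨A', hA'sub, hA'card⟩ :=
      Finset.exists_subset_card_eq (show (p - 2) / h + h + 1 ≤ A.card by omega)
    refine upper_contradiction p h hp h1 h2 A' hA'card ?_
    rintro ⟨B, hB, hBc, hBs⟩
    exact hAno ⟨B, hB.trans hA'sub, hBc, hBs⟩
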